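/- Let p be a prime, ψ : ℚ_p → ℂ^× a nontrivial continuous additive character whose kernel is exactly ℤ_p, and α ∈ ℂ^×. Define φ_0, φ_1 : ℚ_p^× → ℂ by φ_0(y) = α^{−v_p(y)} · 1_{ℤ_p}(y) and φ_1(y) = v_p(y) α^{−v_p(y)} · 1_{ℤ_p}(y), and define the operator T_p on functions φ : ℚ_p^× → ℂ by (T_p φ)(y) = φ(p^{−1} y) + p^{−1} α² (∑_{c=0}^{p−1} ψ(c y)) · φ(p y). Then T_p(φ_0 + φ_1) = 2α (φ_0 + φ_1). -/

import Mathlib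

open Classical

/-- The Kirillov-model vector `φ₀(y) = α^{-v_p(y)} · 1_{ℤ_p∖{0}}(y)` on `ℚ_p^×`. -/
noncomputable def kirillovPhi0 (p : ℕ) [Fact p.Prime] (α : ℂ) : ℚ_[p] → ℂ :=
  fun y => if y ≠ 0 ∧ ‖y‖ ≤ 1 then α ^ (-y.valuation) else 0

/-- The Kirillov-model vector `φ₁(y) = v_p(y) α^{-v_p(y)} · 1_{ℤ_p∖{0}}(y)` on `ℚ_p^×`. -/
noncomputable def kirillovPhi1 (p : ℕ) [Fact p.Prime] (α : ℂ) : ℚ_[p] → ℂ :=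
  fun y => if y ≠ 0 ∧ ‖y‖ ≤ 1 then (y.valuation : ℂ) * α ^ (-y.valuation) else 0

/-- The Hecke operator `T_p` on the Kirillov model:
`(T_p φ)(y) = φ(p⁻¹y) + p⁻¹ α² (∑_{c=0}^{p-1} ψ(cy)) · φ(py)`. -/
noncomputable def kirillovTp (p : ℕ) [Fact p.Prime] (ψ : ℚ_[p] → ℂ) (α : ℂ)
    (φ : ℚ_[p] → ℂ) : ℚ_[p] → ℂ :=
  fun y => φ ((p : ℚ_[p])⁻¹ * y) +
    (p : ℂ)⁻¹ * α ^ 2 * (∑ c ∈ Finset.range p, ψ ((c : ℚ_[p]) * y)) *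
      φ ((p : ℚ_[p]) * y)

theorem Tp_eigenvector_phi0_add_phi1
    (p : ℕ) [Fact p.Prime]
    -- additive character with kernel ℤ_p
    (ψ : ℚ_[p] → ℂ) (hψ_cont : Continuous ψ)
    (hψ_add : ∀ x y : ℚ_[p], ψ (x + y) = ψ x * ψ y)
    (hψ_ker : ∀ x : ℚ_[p], ψ x = 1 ↔ ‖x‖ ≤ 1)
    (α : ℂ) (hα : α ≠ 0) :
    ∀ y : ℚ_[p], y ≠ 0 →
      kirillovTp p ψ α (fun z => kirillovPhi0 p α z + kirillovPhi1 p α z) y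
        = 2 * α * (kirillovPhi0 p α y + kirillovPhi1 p α y) := by
  intro y hy
  have hp : p.Prime := Fact.out
  have hp0 : (p : ℚ_[p]) ≠ 0 := Nat.cast_ne_zero.mpr hp.ne_zero
  have hpc : (p : ℂ) ≠ 0 := Nat.cast_ne_zero.mpr hp.ne_zero
  have hpinv : ((p : ℚ_[p])⁻¹).valuation = -1 := by
    have h1 : ((p : ℚ_[p])⁻¹ * (p : ℚ_[p])).valuation = 0 := by
      rw [inv_mul_cancel₀ hp0]; exact Padic.valuation_one
    rw [Padic.valuation_mul (inv_ne_zero hp0) hp0, Padic.valuation_p] at h1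
    linarith
  set v : ℤ := y.valuation with hv
  have ha0 : (p : ℚ_[p])⁻¹ * y ≠ 0 := mul_ne_zero (inv_ne_zero hp0) hy
  have hb0 : (p : ℚ_[p]) * y ≠ 0 := mul_ne_zero hp0 hy
  have hva : ((p : ℚ_[p])⁻¹ * y).valuation = v - 1 := by
    rw [Padic.valuation_mul (inv_ne_zero hp0) hy, hpinv]; ring
  have hvb : ((p : ℚ_[p]) * y).valuation = v + 1 := by
    rw [Padic.valuation_mul hp0 hy, Padic.valuation_p]; ring
  -- ψ(c·y) = ψ(y)^c
  have hψ0 : ψ 0 = 1 := (hψ_ker 0).mpr (by simp)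
  have hψpow : ∀ c : ℕ, ψ ((c : ℚ_[p]) * y) = ψ y ^ c := by
    intro c
    induction c with
    | zero => simpa using hψ0
    | succ n ih =>
      have : ((n + 1 : ℕ) : ℚ_[p]) * y = (n : ℚ_[p]) * y + y := by push_cast; ring
      rw [this, hψ_add, ih, pow_succ]
  -- the Gauss-type sum
  have hsum_one : ‖y‖ ≤ 1 → (∑ c ∈ Finset.range p, ψ ((c : ℚ_[p]) * y)) = (p : ℂ) := by
    intro hy1
    have : ∀ c ∈ Finset.range p, ψ ((c : ℚ_[p]) * y) = 1 := by
      intro c _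
      refine (hψ_ker _).mpr ?_
      rw [norm_mul]
      calc ‖((c : ℕ) : ℚ_[p])‖ * ‖y‖ ≤ 1 * 1 := by
            refine mul_le_mul ?_ hy1 (norm_nonneg _) zero_le_one
            exact_mod_cast Padic.norm_int_le_one (c : ℤ)
        _ = 1 := by ring
    rw [Finset.sum_congr rfl this]
    simp
  have hsum_zero : v = -1 → (∑ c ∈ Finset.range p, ψ ((c : ℚ_[p]) * y)) = 0 := by
    intro hvm1
    have hζ1 : ψ y ≠ 1 := by
      rw [Ne, hψ_ker, Padic.norm_eq_zpow_neg_valuation hy, ← hv, hvm1]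
      simp only [neg_neg, zpow_one]
      push_neg
      exact_mod_cast hp.one_lt
    have hζp : ψ y ^ p = 1 := by
      rw [← hψpow p]
      refine (hψ_ker _).mpr ?_
      rw [(Padic.norm_le_one_iff_val_nonneg _), hvb, hvm1]
      norm_num
    have := geom_sum_eq hζ1 p
    rw [Finset.sum_congr rfl (fun c _ => hψpow c), this, hζp]
    simp
  -- rewrite norm conditions as valuation conditions
  simp only [kirillovTp, kirillovPhi0, kirillovPhi1]
  simp only [Padic.norm_le_one_iff_val_nonneg, hva, hvb, ← hv]
  have hzpow : ∀ k : ℤ, α ^ (k + 1) = α ^ k * α := fun k => zpow_add_one₀ hα k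
  rcases le_or_gt 1 v with h1 | h1
  · -- v ≥ 1
    have hS : (∑ c ∈ Finset.range p, ψ ((c : ℚ_[p]) * y)) = (p : ℂ) :=
      hsum_one ((Padic.norm_le_one_iff_val_nonneg _).mpr (by linarith))
    rw [hS, if_pos ⟨ha0, by linarith⟩, if_pos ⟨ha0, by linarith⟩,
      if_pos ⟨hb0, by linarith⟩, if_pos ⟨hb0, by linarith⟩,
      if_pos ⟨hy, by linarith⟩, if_pos ⟨hy, by linarith⟩]
    have e1 : α ^ (-(v - 1)) = α ^ (-(v + 1)) * α * α := by
      rw [show -(v - 1) = -(v + 1) + 1 + 1 by ring, hzpow, hzpow]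
    have e2 : α ^ (-v) = α ^ (-(v + 1)) * α := by
      rw [show -v = -(v + 1) + 1 by ring, hzpow]
    rw [e1, e2]
    push_cast
    field_simp
    ring
  · rcases le_or_gt 0 v with h0 | h0
    · -- v = 0
      have hv0 : v = 0 := le_antisymm (by linarith) h0
      have hS : (∑ c ∈ Finset.range p, ψ ((c : ℚ_[p]) * y)) = (p : ℂ) :=
        hsum_one ((Padic.norm_le_one_iff_val_nonneg _).mpr (by linarith))
      rw [hS, if_neg (by rw [hv0]; norm_num), if_neg (by rw [hv0]; norm_num),
        if_pos ⟨hb0, by linarith⟩, if_pos ⟨hb0, by linarith⟩,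
        if_pos ⟨hy, h0⟩, if_pos ⟨hy, h0⟩, hv0]
      push_cast
      field_simp
      rw [neg_zero, zpow_zero]; ring
    · rcases eq_or_lt_of_le (show v ≤ -1 by linarith) with hm1 | hm2
      · -- v = -1
        have hS := hsum_zero hm1
        rw [hS, if_neg (by rw [hm1]; norm_num), if_neg (by rw [hm1]; norm_num), hm1]
        norm_num
      · -- v ≤ -2
        rw [if_neg (fun h => by linarith [h.2]), if_neg (fun h => by linarith [h.2]),
          if_neg (fun h => by linarith [h.2]), if_neg (fun h => by linarith [h.2]),
          if_neg (fun h => by linarith [h.2]), if_neg (fun h => by linarith [h.2])]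
        ring
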